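/- For any bipartite graph H on n vertices with e(H) edges and any integer q ≥ 1, the number of proper q-colorings satisfies ch(H,q) ≥ q^n · ((q-1)/q)^{e(H)}. -/

import Mathlib

open SimpleGraph Finset

open scoped Classical

section Kempe

variable {V : Type*} {q : ℕ}

/-- The subgraph of edges whose both endpoints are colored a or b. -/
def kgraph (G : SimpleGraph V) (a b : Fin q) (c : V → Fin q) : SimpleGraph V where
  Adj x y := G.Adj x y ∧ c x ∈ ({a, b} : Set (Fin q)) ∧ c y ∈ ({a, b} : Set (Fin q))
  symm := ⟨by rintro x y ⟨h1, h2, h3⟩; exact ⟨h1.symm, h3, h2⟩⟩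
  loopless := ⟨by rintro x ⟨h1, _⟩; exact G.irrefl h1⟩

/-- Kempe swap on the component of `u`. -/
noncomputable def kswap (G : SimpleGraph V) (u : V) (a b : Fin q) (c : V → Fin q) : V → Fin q :=
  fun x => if (kgraph G a b c).Reachable u x then Equiv.swap a b (c x) else c x

variable {G : SimpleGraph V} {u : V} {a b : Fin q}

lemma swap_mem_iff (y : Fin q) :
    Equiv.swap a b y ∈ ({a, b} : Set (Fin q)) ↔ y ∈ ({a, b} : Set (Fin q)) := by
  by_cases hy : y = a
  · subst hy; simp [Equiv.swap_apply_left]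
  · by_cases hy' : y = b
    · subst hy'; simp [Equiv.swap_apply_right]
    · rw [Equiv.swap_apply_of_ne_of_ne hy hy']

lemma kswap_mem_iff (c : V → Fin q) (x : V) :
    kswap G u a b c x ∈ ({a, b} : Set (Fin q)) ↔ c x ∈ ({a, b} : Set (Fin q)) := by
  unfold kswap
  split_ifs with h
  · exact swap_mem_iff _
  · exact Iff.rfl

lemma kgraph_kswap (c : V → Fin q) : kgraph G a b (kswap G u a b c) = kgraph G a b c := by
  ext x y
  show G.Adj x y ∧ _ ∧ _ ↔ G.Adj x y ∧ _ ∧ _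
  rw [kswap_mem_iff, kswap_mem_iff]

lemma kswap_kswap (c : V → Fin q) : kswap G u a b (kswap G u a b c) = c := by
  funext x
  conv_lhs => rw [kswap, kgraph_kswap]
  rw [kswap]
  split_ifs with h
  · simp
  · rfl

lemma mem_of_walk {c : V → Fin q} {x y : V} (w : (kgraph G a b c).Walk x y)
    (hx : c x ∈ ({a, b} : Set (Fin q))) : c y ∈ ({a, b} : Set (Fin q)) := by
  induction w with
  | nil => exact hx
  | cons h p ih => exact ih h.2.2

lemma fin2_helper : ∀ (p r s : Fin 2), p ≠ r → (p = s ↔ ¬ r = s) := by decide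

lemma two_set_helper {p r s : Fin q} (hpr : p ≠ r)
    (hp : p ∈ ({a, b} : Set (Fin q))) (hr : r ∈ ({a, b} : Set (Fin q)))
    (hs : s ∈ ({a, b} : Set (Fin q))) : (p = s ↔ ¬ r = s) := by
  simp only [Set.mem_insert_iff, Set.mem_singleton_iff] at hp hr hs
  rcases hp with rfl | rfl <;> rcases hr with rfl | rfl <;> rcases hs with rfl | rfl <;> tauto

lemma parity {c : V → Fin q} {f : V → Fin 2}
    (hc : ∀ x y, G.Adj x y → c x ≠ c y) (hf : ∀ x y, G.Adj x y → f x ≠ f y) :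
    ∀ {x y : V}, (kgraph G a b c).Walk x y → c x ∈ ({a, b} : Set (Fin q)) →
      (c x = c y ↔ f x = f y) := by
  intro x y w
  induction w with
  | nil => intro _; simp
  | @cons x z y h p ih =>
    intro hx
    have hz : c z ∈ ({a, b} : Set (Fin q)) := h.2.2
    have hy : c y ∈ ({a, b} : Set (Fin q)) := mem_of_walk p hz
    have h1 : c x = c y ↔ ¬ c z = c y := two_set_helper (hc _ _ h.1) hx hz hy
    have h2 : f x = f y ↔ ¬ f z = f y := fin2_helper _ _ _ (hf _ _ h.1)
    rw [h1, h2, ih hz]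

lemma not_reachable {c : V → Fin q} {f : V → Fin 2} {v : V}
    (hc : ∀ x y, G.Adj x y → c x ≠ c y) (hf : ∀ x y, G.Adj x y → f x ≠ f y)
    (hcu : c u = a) (hcv : c v = a) (hfuv : f u ≠ f v) :
    ¬ (kgraph G a b c).Reachable u v := by
  intro h
  obtain ⟨w⟩ := h
  exact hfuv ((parity hc hf w (by simp [hcu])).mp (hcu.trans hcv.symm))

lemma kswap_proper {c : V → Fin q}
    (hc : ∀ x y, G.Adj x y → c x ≠ c y) (hcu : c u ∈ ({a, b} : Set (Fin q))) :
    ∀ x y, G.Adj x y → kswap G u a b c x ≠ kswap G u a b c y := by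
  intro x y hadj
  unfold kswap
  split_ifs with hx hy hy
  · exact fun h => hc _ _ hadj ((Equiv.swap a b).injective h)
  · -- x reachable, y not
    have hcx : c x ∈ ({a, b} : Set (Fin q)) := by
      obtain ⟨w⟩ := hx; exact mem_of_walk w hcu
    have hcy : c y ∉ ({a, b} : Set (Fin q)) := by
      intro hcy
      exact hy (hx.trans (SimpleGraph.Adj.reachable ⟨hadj, hcx, hcy⟩))
    intro h
    exact hcy (h ▸ (swap_mem_iff (c x)).mpr hcx)
  · -- y reachable, x not
    have hcy : c y ∈ ({a, b} : Set (Fin q)) := by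
      obtain ⟨w⟩ := hy; exact mem_of_walk w hcu
    have hcx : c x ∉ ({a, b} : Set (Fin q)) := by
      intro hcx
      exact hx (hy.trans (SimpleGraph.Adj.reachable ⟨hadj.symm, hcy, hcx⟩))
    intro h
    exact hcx (h ▸ (swap_mem_iff (c y)).mpr hcy)
  · exact hc _ _ hadj

lemma kswap_u {c : V → Fin q} (hcu : c u = a) : kswap G u a b c u = b := by
  rw [kswap]
  simp only [Reachable.refl, if_pos, hcu, Equiv.swap_apply_left]

lemma kswap_v {c : V → Fin q} {f : V → Fin 2} {v : V}
    (hc : ∀ x y, G.Adj x y → c x ≠ c y) (hf : ∀ x y, G.Adj x y → f x ≠ f y)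
    (hcu : c u = a) (hcv : c v = a) (hfuv : f u ≠ f v) :
    kswap G u a b c v = a := by
  rw [kswap]
  rw [if_neg (not_reachable hc hf hcu hcv hfuv)]
  exact hcv

end Kempe

section Count
variable {V : Type*} [Fintype V]

lemma count_le (G : SimpleGraph V) (f : V → Fin 2) (hf : ∀ x y, G.Adj x y → f x ≠ f y)
    (u v : V) (hfuv : f u ≠ f v) (q : ℕ) :
    q * (univ.filter (fun c : V → Fin q =>
        (∀ x y, G.Adj x y → c x ≠ c y) ∧ c u = c v)).card
      ≤ (univ.filter (fun c : V → Fin q => ∀ x y, G.Adj x y → c x ≠ c y)).card := by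
  classical
  set P : (V → Fin q) → Prop := fun c => ∀ x y, G.Adj x y → c x ≠ c y with hP
  -- fibers
  have h1 : (univ.filter (fun c : V → Fin q => P c ∧ c u = c v)).card
      = ∑ i : Fin q, (univ.filter (fun c : V → Fin q => P c ∧ c u = i ∧ c v = i)).card := by
    rw [Finset.card_eq_sum_card_fiberwise (f := fun c : V → Fin q => c u) (t := univ)
      (fun c _ => mem_univ _)]
    refine Finset.sum_congr rfl fun i _ => ?_
    rw [Finset.filter_filter]
    congr 1
    ext c
    simp only [mem_filter, mem_univ, true_and]
    constructor
    · rintro ⟨⟨hp, huv⟩, hi⟩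
      exact ⟨hp, hi, huv.symm.trans hi⟩
    · rintro ⟨hp, hi, hv⟩
      exact ⟨⟨hp, hi.trans hv.symm⟩, hi⟩
  have h2 : (univ.filter (fun c : V → Fin q => P c)).card
      = ∑ i : Fin q, (univ.filter (fun c : V → Fin q => P c ∧ c v = i)).card := by
    rw [Finset.card_eq_sum_card_fiberwise (f := fun c : V → Fin q => c v) (t := univ)
      (fun c _ => mem_univ _)]
    refine Finset.sum_congr rfl fun i _ => ?_
    rw [Finset.filter_filter]
  have h3 : ∀ i : Fin q, (univ.filter (fun c : V → Fin q => P c ∧ c v = i)).card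
      = ∑ j : Fin q, (univ.filter (fun c : V → Fin q => P c ∧ c u = j ∧ c v = i)).card := by
    intro i
    rw [Finset.card_eq_sum_card_fiberwise (f := fun c : V → Fin q => c u) (t := univ)
      (fun c _ => mem_univ _)]
    refine Finset.sum_congr rfl fun j _ => ?_
    rw [Finset.filter_filter]
    congr 1
    ext c
    simp only [mem_filter]
    tauto
  -- key injection
  have key : ∀ (i j : Fin q),
      (univ.filter (fun c : V → Fin q => P c ∧ c u = i ∧ c v = i)).card
      ≤ (univ.filter (fun c : V → Fin q => P c ∧ c u = j ∧ c v = i)).card := by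
    intro i j
    by_cases hij : j = i
    · subst hij; exact le_refl _
    · apply Finset.card_le_card_of_injOn (kswap G u i j)
      · intro c hc
        simp only [Finset.mem_coe, mem_filter, mem_univ, true_and] at hc ⊢
        obtain ⟨hp, hu, hv⟩ := hc
        refine ⟨kswap_proper hp (by simp [hu]), kswap_u hu, kswap_v hp hf hu hv hfuv⟩
      · intro c1 h1 c2 h2 hk
        have := congrArg (kswap G u i j) hk
        rwa [kswap_kswap, kswap_kswap] at this
  calc q * (univ.filter (fun c : V → Fin q => P c ∧ c u = c v)).card
      = ∑ i : Fin q, q * (univ.filter (fun c : V → Fin q => P c ∧ c u = i ∧ c v = i)).card := by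
        rw [h1, Finset.mul_sum]
    _ = ∑ i : Fin q, ∑ _j : Fin q,
          (univ.filter (fun c : V → Fin q => P c ∧ c u = i ∧ c v = i)).card := by
        simp [Finset.sum_const, Finset.card_univ, mul_comm]
    _ ≤ ∑ i : Fin q, ∑ j : Fin q,
          (univ.filter (fun c : V → Fin q => P c ∧ c u = j ∧ c v = i)).card := by
        refine Finset.sum_le_sum fun i _ => Finset.sum_le_sum fun j _ => key i j
    _ = ∑ i : Fin q, (univ.filter (fun c : V → Fin q => P c ∧ c v = i)).card := by
        refine Finset.sum_congr rfl fun i _ => (h3 i).symm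
    _ = (univ.filter (fun c : V → Fin q => P c)).card := h2.symm

end Count

section Main
variable {V : Type*} [Fintype V]

lemma main_aux : ∀ (m : ℕ) (H : SimpleGraph V), H.Colorable 2 → Nat.card H.edgeSet = m →
    ∀ q : ℕ, 1 ≤ q →
    ((univ.filter (fun c : V → Fin q => ∀ x y, H.Adj x y → c x ≠ c y)).card : ℝ)
      ≥ (q : ℝ) ^ (Fintype.card V) * (((q : ℝ) - 1) / q) ^ m := by
  intro m
  induction m using Nat.strong_induction_on with
  | _ m ih =>
    intro H hbip hm q hq
    by_cases hE : H.edgeSet = ∅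
    · -- no edges
      have hm0 : m = 0 := by
        rw [← hm, hE]; simp
      have hadj : ∀ x y : V, ¬ H.Adj x y := by
        intro x y hxy
        have : s(x, y) ∈ H.edgeSet := hxy
        rw [hE] at this
        exact this
      have : (univ.filter (fun c : V → Fin q => ∀ x y, H.Adj x y → c x ≠ c y)) = univ := by
        apply Finset.filter_true_of_mem
        intro c _ x y hxy
        exact absurd hxy (hadj x y)
      rw [this, hm0]
      simp only [pow_zero, mul_one, Finset.card_univ, ge_iff_le]
      rw [Fintype.card_fun, Fintype.card_fin]
      push_cast
      ring_nf
      exact le_refl _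
    · -- has an edge
      obtain ⟨e, he⟩ := Set.nonempty_iff_ne_empty.mpr hE
      revert he
      refine Sym2.ind ?_ e
      intro u v he
      have huv : H.Adj u v := (SimpleGraph.mem_edgeSet H).mp he
      set H' : SimpleGraph V := H.deleteEdges {s(u, v)} with hH'
      have hle : H' ≤ H := SimpleGraph.deleteEdges_le _
      obtain ⟨C⟩ := hbip
      have hfH : ∀ x y, H.Adj x y → C x ≠ C y := fun x y h => C.valid h
      have hf' : ∀ x y, H'.Adj x y → C x ≠ C y := fun x y h => hfH x y (hle h)
      have hfuv : C u ≠ C v := C.valid huv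
      -- edge count of H'
      have hES : H'.edgeSet = H.edgeSet \ {s(u, v)} := SimpleGraph.edgeSet_deleteEdges _
      have hfin : H.edgeSet.Finite := Set.toFinite _
      have hmpos : 0 < m := by
        rw [← hm, Nat.card_coe_set_eq]
        exact (Set.ncard_pos hfin).mpr ⟨_, he⟩
      have hcard' : Nat.card H'.edgeSet = m - 1 := by
        rw [Nat.card_coe_set_eq, hES, Set.ncard_diff_singleton_of_mem he,
          ← Nat.card_coe_set_eq, hm]
      -- predicate split
      have hsplit : ∀ c : V → Fin q,
          (∀ x y, H.Adj x y → c x ≠ c y) ↔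
            ((∀ x y, H'.Adj x y → c x ≠ c y) ∧ ¬ c u = c v) := by
        intro c
        constructor
        · intro hp
          exact ⟨fun x y h => hp x y (hle h), hp u v huv⟩
        · rintro ⟨hp, hne⟩ x y hxy
          by_cases hxyuv : s(x, y) = s(u, v)
          · rw [Sym2.eq_iff] at hxyuv
            rcases hxyuv with ⟨rfl, rfl⟩ | ⟨rfl, rfl⟩
            · exact hne
            · exact fun h => hne (h.symm)
          · refine hp x y ?_
            rw [hH', SimpleGraph.deleteEdges_adj]
            exact ⟨hxy, by simpa using hxyuv⟩
      set A := univ.filter (fun c : V → Fin q => ∀ x y, H'.Adj x y → c x ≠ c y) with hA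
      set B := univ.filter (fun c : V → Fin q =>
        (∀ x y, H'.Adj x y → c x ≠ c y) ∧ c u = c v) with hB
      have hcards : (univ.filter (fun c : V → Fin q => ∀ x y, H.Adj x y → c x ≠ c y)).card
          + B.card = A.card := by
        have e1 : univ.filter (fun c : V → Fin q => ∀ x y, H.Adj x y → c x ≠ c y)
            = A.filter (fun c => ¬ c u = c v) := by
          rw [hA, Finset.filter_filter]
          ext c
          simp only [mem_filter, mem_univ, true_and]
          exact hsplit c
        have e2 : B = A.filter (fun c => c u = c v) := by
          rw [hA, Finset.filter_filter]
        rw [e1, e2, add_comm]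
        exact Finset.card_filter_add_card_filter_not (s := A) (p := fun c => c u = c v)
      have h0 := count_le H' C hf' u v hfuv q
      have hkey : q * B.card ≤ A.card := by rw [hA, hB]; convert h0
      -- IH
      have hbip' : H'.Colorable 2 := ⟨SimpleGraph.Coloring.mk C (fun h => hf' _ _ h)⟩
      have hIH : (A.card : ℝ) ≥ (q : ℝ) ^ (Fintype.card V) * (((q : ℝ) - 1) / q) ^ (m - 1) := by
        have h1 := ih (m - 1) (Nat.sub_lt hmpos one_pos) H' hbip' hcard' q hq
        rw [hA]; convert h1
      -- arithmetic
      have hq0 : (0 : ℝ) < q := by exact_mod_cast hq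
      have hx0 : (0 : ℝ) ≤ ((q : ℝ) - 1) / q := by
        apply div_nonneg _ (le_of_lt hq0)
        have : (1 : ℝ) ≤ (q : ℝ) := by exact_mod_cast hq
        linarith
      have hBA : (B.card : ℝ) ≤ (A.card : ℝ) / q := by
        rw [le_div_iff₀ hq0]
        have : (q * B.card : ℕ) ≤ (A.card : ℕ) := hkey
        calc (B.card : ℝ) * q = ((q * B.card : ℕ) : ℝ) := by push_cast; ring
          _ ≤ (A.card : ℝ) := by exact_mod_cast this
      have hstep : ((univ.filter (fun c : V → Fin q =>
          ∀ x y, H.Adj x y → c x ≠ c y)).card : ℝ) = A.card - B.card := by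
        have := congrArg (Nat.cast : ℕ → ℝ) hcards
        push_cast at this
        linarith
      rw [hstep, ge_iff_le]
      have hAx : (A.card : ℝ) * (((q : ℝ) - 1) / q) ≤ (A.card : ℝ) - B.card := by
        have hone : (A.card : ℝ) * (((q : ℝ) - 1) / q) = A.card - A.card / q := by
          field_simp
        rw [hone]
        linarith
      have hfinal : ((q : ℝ) ^ Fintype.card V * (((q : ℝ) - 1) / q) ^ (m - 1))
            * (((q : ℝ) - 1) / q) ≤ (A.card : ℝ) * (((q : ℝ) - 1) / q) :=
        mul_le_mul_of_nonneg_right hIH hx0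
      calc (q : ℝ) ^ Fintype.card V * (((q : ℝ) - 1) / q) ^ m
          = ((q : ℝ) ^ Fintype.card V * (((q : ℝ) - 1) / q) ^ (m - 1))
            * (((q : ℝ) - 1) / q) := by
            rw [mul_assoc, ← pow_succ, Nat.sub_add_cancel hmpos]
        _ ≤ (A.card : ℝ) * (((q : ℝ) - 1) / q) := hfinal
        _ ≤ (A.card : ℝ) - B.card := hAx

end Main

/-- Number of proper colorings of a graph with q colors. -/
noncomputable def chrom {V : Type*} (H : SimpleGraph V) (q : ℕ) : ℕ :=
  Nat.card {c : V → Fin q // ∀ a b, H.Adj a b → c a ≠ c b}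

theorem stmt_12 {V : Type*} [Fintype V] (H : SimpleGraph V) (hbip : H.Colorable 2)
    (q : ℕ) (hq : 1 ≤ q) :
    (chrom H q : ℝ) ≥
      (q : ℝ) ^ (Fintype.card V) * (((q : ℝ) - 1) / q) ^ (Nat.card H.edgeSet) := by
  classical
  have hc : chrom H q
      = (univ.filter (fun c : V → Fin q => ∀ a b, H.Adj a b → c a ≠ c b)).card := by
    rw [chrom, Nat.card_eq_fintype_card, Fintype.card_subtype]
  rw [hc]
  exact main_aux _ H hbip rfl q hq
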